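/- Let d ≥ 2 and R ∈ ℕ. Let g : E^d_± → ℝ, w : ℤ^d → ℝ, and h, f : ℤ^d → ℝ^d satisfy: g(x,y) = −g(y,x) for all (x,y) ∈ E^d_±; h_i(x) = g(x, x+e_i) for all x ∈ ℤ^d and i ∈ {1,…,d}; (∇^*·h)(x) = (∇^*·f)(x) for all x ∈ D_R; and f(x) = 0 for all x ∈ ℤ^d \ D_{R−1}. Then Σ_{(x,y)∈E_R} g(x,y) ∇̄_{xy} w = 2 Σ_{y∈∂̃D_R} g(n_R(y)) w(y) + 2 Σ_{x∈D_R} ∇w(x) · f(x). -/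

import Mathlib

open MeasureTheory Filter
open scoped ENNReal Classical

noncomputable section

/-- Points of the lattice `ℤ^d`. -/
abbrev Zd (d : ℕ) := Fin d → ℤ

/-- The `i`-th standard unit vector of `ℤ^d`. -/
def unitVec {d : ℕ} (i : Fin d) : Zd d := fun j => if j = i then 1 else 0

/-- Environments: a positive conductance for every (unoriented nearest-neighbour) edge,
where the edge `{x, x + e i}` is encoded by the pair `(x, i)`. -/
abbrev Env (d : ℕ) := ((Fin d → ℤ) × Fin d) → {r : ℝ // 0 < r}

/-- The conductance of the edge `{x, x + e i}` in the environment `ω`, as a real number. -/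
def cval {d : ℕ} (ω : Env d) (x : Zd d) (i : Fin d) : ℝ := (ω (x, i)).1

/-- Nearest-neighbour adjacency on `ℤ^d`. -/
def Adj {d : ℕ} (x y : Zd d) : Prop :=
  ∃ i : Fin d, y = x + unitVec i ∨ x = y + unitVec i

/-- The conductance `ω_{xy}` between two nearest neighbours `x ∼ y` (and `0` otherwise). -/
def econd {d : ℕ} (ω : Env d) (x y : Zd d) : ℝ :=
  ∑ i : Fin d, ((if y = x + unitVec i then cval ω x i else 0)
    + (if x = y + unitVec i then cval ω y i else 0))

/-- Discrete gradient `(∇_i u)(x) = u(x+e_i) - u(x)`. -/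
def dGrad {d : ℕ} (i : Fin d) (f : Zd d → ℝ) (x : Zd d) : ℝ :=
  f (x + unitVec i) - f x

/-- Discrete backward gradient `(∇_i^* u)(x) = u(x-e_i) - u(x)`. -/
def dGradStar {d : ℕ} (i : Fin d) (f : Zd d → ℝ) (x : Zd d) : ℝ :=
  f (x - unitVec i) - f x

/-- Discrete divergence `(∇^* ⬝ F)(x) = ∑ i, (F_i(x-e_i) - F_i(x))`. -/
def divStar {d : ℕ} (F : Zd d → Fin d → ℝ) (x : Zd d) : ℝ :=
  ∑ i : Fin d, (F (x - unitVec i) i - F x i)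

/-- Discrete Laplacian `Δu = -∑ i, ∇_i^* ∇_i u`. -/
def lap {d : ℕ} (f : Zd d → ℝ) (x : Zd d) : ℝ :=
  - ∑ i : Fin d, dGradStar i (dGrad i f) x

/-- The open discrete box `D_R = {x : |x|_∞ < R}`. -/
def boxD (d R : ℕ) : Finset (Zd d) :=
  Fintype.piFinset fun _ => Finset.Ioo (-(R : ℤ)) (R : ℤ)

/-- The closed discrete box `D̄_R = {x : |x|_∞ ≤ R}`. -/
def boxC (d R : ℕ) : Finset (Zd d) :=
  Fintype.piFinset fun _ => Finset.Icc (-(R : ℤ)) (R : ℤ)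

/-- The discrete boundary `∂D_R = {x : |x|_∞ = R}`. -/
def bdry (d R : ℕ) : Finset (Zd d) := boxC d R \ boxD d R

/-- The reduced boundary `∂̃D_R` of points of `∂D_R` having a neighbour in `D_R`. -/
def tbdry (d R : ℕ) : Finset (Zd d) :=
  (bdry d R).filter fun x => ∃ y ∈ boxD d R, Adj x y

/-- The oriented edge set `E_R = {(x,y) : x ∼ y, |x+y|_∞ < 2R}`. -/
def ER (d R : ℕ) : Finset (Zd d × Zd d) :=
  ((boxC d R) ×ˢ (boxC d R)).filter fun e =>
    Adj e.1 e.2 ∧ ∀ i, |e.1 i + e.2 i| < 2 * (R : ℤ)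

/-- The normal edges `E_R^{nor} = {(x,y) : x ∈ D_R, y ∈ ∂D_R, x ∼ y}`. -/
def Enor (d R : ℕ) : Finset (Zd d × Zd d) :=
  ((boxD d R) ×ˢ (bdry d R)).filter fun e => Adj e.1 e.2

/-- The tangential edges `E_R^{tan} = {(x,y) : x, y ∈ ∂D_R, x ∼ y}`. -/
def Etan (d R : ℕ) : Finset (Zd d × Zd d) :=
  ((bdry d R) ×ˢ (bdry d R)).filter fun e => Adj e.1 e.2

/-- Normalized `ℓ^r` norm `⦀u⦀_{r,A}` on a finite set. -/
def avNorm {V : Type*} (r : ℝ) (A : Finset V) (u : V → ℝ) : ℝ :=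
  ((∑ x ∈ A, |u x| ^ r) / (A.card : ℝ)) ^ (1 / r)

/-- Sup norm `⦀u⦀_{∞,A}` on a finite set. -/
def supNorm {V : Type*} (A : Finset V) (u : V → ℝ) : ℝ :=
  ⨆ x ∈ A, |u x|

/-- Normalized `ℓ^r` norm for an extended exponent `r ∈ [1,∞]`. -/
def avNormE {V : Type*} (r : ℝ≥0∞) (A : Finset V) (u : V → ℝ) : ℝ :=
  if r = ∞ then supNorm A u else avNorm r.toReal A u

/-- The exponent `2p/(p-1)`, with the convention that it equals `2` for `p = ∞`. -/
def dualExp (p : ℝ≥0∞) : ℝ :=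
  if p = ∞ then 2 else 2 * p.toReal / (p.toReal - 1)

/-- The exponent `2p/(p+1)`, with the convention that it equals `2` for `p = ∞`. -/
def coExp (p : ℝ≥0∞) : ℝ :=
  if p = ∞ then 2 else 2 * p.toReal / (p.toReal + 1)

/-- Euclidean norm on `ℝ^d`. -/
def vecNorm {d : ℕ} (v : Fin d → ℝ) : ℝ := Real.sqrt (∑ i, v i ^ 2)

/-- The translation `τ_a` acting on environments. -/
def shiftEnv {d : ℕ} (a : Zd d) (ω : Env d) : Env d := fun e => ω (e.1 + a, e.2)

/-- Stationarity of a measure on environments. -/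
def Stationary {d : ℕ} (P : Measure (Env d)) : Prop :=
  ∀ a : Zd d, MeasurePreserving (shiftEnv a) P P

/-- Ergodicity of a measure on environments w.r.t. the translations. -/
def ErgodicEnv {d : ℕ} (P : Measure (Env d)) : Prop :=
  ∀ A : Set (Env d), MeasurableSet A → (∀ a : Zd d, shiftEnv a ⁻¹' A = A) →
    P A = 0 ∨ P A = 1

/-- Stationary (`Stat_P`) random fields. -/
def StatP {d : ℕ} {E : Type*} [MeasurableSpace E] (P : Measure (Env d))
    (f : Env d → Zd d → E) : Prop :=
  Measurable (Function.uncurry f) ∧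
    ∀ᵐ ω ∂P, ∀ x : Zd d, f ω x = f (shiftEnv x ω) 0

/-- The horizontal derivative `D_i` on functions of the environment. -/
def Dop {d : ℕ} (i : Fin d) (ζ : Env d → ℝ) : Env d → ℝ :=
  fun ω => ζ (shiftEnv (unitVec i) ω) - ζ ω

/-- The horizontal derivative `D_i^*` on functions of the environment. -/
def DopStar {d : ℕ} (i : Fin d) (ζ : Env d → ℝ) : Env d → ℝ :=
  fun ω => ζ (shiftEnv (-(unitVec i)) ω) - ζ ω

/-- The reflection of `ℤ^d` flipping the `j`-th coordinate. -/
def reflPt {d : ℕ} (j : Fin d) (x : Zd d) : Zd d := fun k => if k = j then -x k else x k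

/-- The reflection `ρ_j` acting on environments. -/
def reflEnv {d : ℕ} (j : Fin d) (ω : Env d) : Env d :=
  fun e => ω (if e.2 = j then reflPt j e.1 - unitVec j else reflPt j e.1, e.2)
section helpers
variable {d R : ℕ}

lemma mem_boxD {x : Zd d} : x ∈ boxD d R ↔ ∀ j, -(R:ℤ) < x j ∧ x j < R := by
  simp [boxD, Fintype.mem_piFinset]

lemma mem_boxC {x : Zd d} : x ∈ boxC d R ↔ ∀ j, -(R:ℤ) ≤ x j ∧ x j ≤ R := by
  simp [boxC, Fintype.mem_piFinset]

lemma addu (x : Zd d) (i j : Fin d) : (x + unitVec i) j = x j + if j = i then 1 else 0 := rfl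

lemma subu (x : Zd d) (i j : Fin d) : (x - unitVec i) j = x j - if j = i then 1 else 0 := rfl

lemma adj_right (x : Zd d) (i : Fin d) : Adj x (x + unitVec i) := ⟨i, Or.inl rfl⟩

lemma adj_left (x : Zd d) (i : Fin d) : Adj (x + unitVec i) x := ⟨i, Or.inr rfl⟩

/-- The face set `A_i`. -/
def sideA (d R : ℕ) (i : Fin d) : Finset (Zd d) :=
  Fintype.piFinset fun j => if j = i then Finset.Icc (-(R:ℤ)) ((R:ℤ)-1) else Finset.Ioo (-(R:ℤ)) (R:ℤ)

lemma mem_sideA {i : Fin d} {x : Zd d} :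
    x ∈ sideA d R i ↔ (-(R:ℤ) ≤ x i ∧ x i ≤ (R:ℤ)-1) ∧ ∀ j, j ≠ i → (-(R:ℤ) < x j ∧ x j < R) := by
  simp only [sideA, Fintype.mem_piFinset]
  constructor
  · intro hx
    refine ⟨?_, fun j hj => ?_⟩
    · have := hx i; simpa using this
    · have := hx j; rw [if_neg hj] at this; simpa using this
  · rintro ⟨h1, h2⟩ j
    by_cases hj : j = i
    · subst hj; simp [h1]
    · rw [if_neg hj]; simpa using h2 j hj

lemma pos_mem_ER {i : Fin d} {x : Zd d} :
    (x, x + unitVec i) ∈ ER d R ↔ x ∈ sideA d R i := by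
  simp only [ER, Finset.mem_filter, Finset.mem_product, mem_boxC, mem_sideA, abs_lt]
  constructor
  · rintro ⟨⟨h1, h2⟩, -, hb⟩
    refine ⟨?_, fun j hj => ?_⟩
    · have := hb i; rw [addu, if_pos rfl] at this; omega
    · have := hb j; rw [addu, if_neg hj] at this; omega
  · rintro ⟨h1, h2⟩
    refine ⟨⟨fun j => ?_, fun j => ?_⟩, adj_right x i, fun j => ?_⟩
    · by_cases hj : j = i
      · subst hj; omega
      · have := h2 j hj; omega
    · rw [addu]; by_cases hj : j = i
      · subst hj; rw [if_pos rfl]; omega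
      · rw [if_neg hj]; have := h2 j hj; omega
    · rw [addu]; by_cases hj : j = i
      · subst hj; rw [if_pos rfl]; omega
      · rw [if_neg hj]; have := h2 j hj; omega

end helpers
section helpers2
variable {d R : ℕ}

/-- `A_i + e_i`. -/
def sideB (d R : ℕ) (i : Fin d) : Finset (Zd d) := (sideA d R i).image (· + unitVec i)

lemma mem_sideB' {i : Fin d} {x : Zd d} :
    x ∈ sideB d R i ↔ (-(R:ℤ)+1 ≤ x i ∧ x i ≤ (R:ℤ)) ∧ ∀ j, j ≠ i → (-(R:ℤ) < x j ∧ x j < R) := by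
  simp only [sideB, Finset.mem_image]
  constructor
  · rintro ⟨a, ha, rfl⟩
    rw [mem_sideA] at ha
    obtain ⟨h1, h2⟩ := ha
    refine ⟨?_, fun j hj => ?_⟩
    · rw [addu, if_pos rfl]; omega
    · rw [addu, if_neg hj]; have := h2 j hj; constructor <;> omega
  · rintro ⟨h1, h2⟩
    refine ⟨x - unitVec i, ?_, sub_add_cancel x _⟩
    rw [mem_sideA]
    refine ⟨?_, fun j hj => ?_⟩
    · rw [subu, if_pos rfl]; omega
    · rw [subu, if_neg hj]; have := h2 j hj; constructor <;> omega

lemma filterA_eq (i : Fin d) :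
    (sideA d R i).filter (fun x => ¬ x i = -(R:ℤ)) = boxD d R := by
  ext x
  simp only [Finset.mem_filter, mem_sideA, mem_boxD]
  constructor
  · rintro ⟨⟨h1, h2⟩, h3⟩ j
    by_cases hj : j = i
    · subst hj; omega
    · exact h2 j hj
  · intro hx
    have hi := hx i
    exact ⟨⟨⟨by omega, by omega⟩, fun j _ => hx j⟩, by omega⟩

lemma filterB_eq (i : Fin d) :
    (sideB d R i).filter (fun x => ¬ x i = (R:ℤ)) = boxD d R := by
  ext x
  simp only [Finset.mem_filter, mem_sideB', mem_boxD]
  constructor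
  · rintro ⟨⟨h1, h2⟩, h3⟩ j
    by_cases hj : j = i
    · subst hj; omega
    · exact h2 j hj
  · intro hx
    have hi := hx i
    exact ⟨⟨⟨by omega, by omega⟩, fun j _ => hx j⟩, by omega⟩

def facePlus (d R : ℕ) (i : Fin d) : Finset (Zd d) := (sideB d R i).filter (fun y => y i = (R:ℤ))

def faceMinus (d R : ℕ) (i : Fin d) : Finset (Zd d) := (sideA d R i).filter (fun y => y i = -(R:ℤ))

lemma facePlus_prop {i : Fin d} {y : Zd d} (h : y ∈ facePlus d R i) :
    (1 ≤ (R:ℤ) ∧ y i = R) ∧ ∀ j, j ≠ i → (-(R:ℤ) < y j ∧ y j < R) := by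
  obtain ⟨h1, h2⟩ := Finset.mem_filter.1 h
  rw [mem_sideB'] at h1
  exact ⟨⟨by omega, h2⟩, h1.2⟩

lemma faceMinus_prop {i : Fin d} {y : Zd d} (h : y ∈ faceMinus d R i) :
    (1 ≤ (R:ℤ) ∧ y i = -(R:ℤ)) ∧ ∀ j, j ≠ i → (-(R:ℤ) < y j ∧ y j < R) := by
  obtain ⟨h1, h2⟩ := Finset.mem_filter.1 h
  rw [mem_sideA] at h1
  exact ⟨⟨by omega, h2⟩, h1.2⟩

lemma mem_tbdry {x : Zd d} :
    x ∈ tbdry d R ↔ ((∀ j, -(R:ℤ) ≤ x j ∧ x j ≤ R) ∧ ¬ ∀ j, -(R:ℤ) < x j ∧ x j < R)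
      ∧ ∃ y : Zd d, (∀ j, -(R:ℤ) < y j ∧ y j < (R:ℤ)) ∧ Adj x y := by
  simp only [tbdry, bdry, Finset.mem_filter, Finset.mem_sdiff, mem_boxC, mem_boxD]

lemma facePlus_subset_tbdry (i : Fin d) : facePlus d R i ⊆ tbdry d R := by
  intro y hy
  obtain ⟨⟨hR, hyi⟩, hrest⟩ := facePlus_prop hy
  rw [mem_tbdry]
  refine ⟨⟨fun j => ?_, fun hall => ?_⟩, ⟨y - unitVec i, fun j => ?_, ⟨i, Or.inr (sub_add_cancel y _).symm⟩⟩⟩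
  · by_cases hj : j = i
    · subst hj; omega
    · have := hrest j hj; omega
  · have := hall i; omega
  · rw [subu]; by_cases hj : j = i
    · subst hj; rw [if_pos rfl]; omega
    · rw [if_neg hj]; have := hrest j hj; omega

lemma faceMinus_subset_tbdry (i : Fin d) : faceMinus d R i ⊆ tbdry d R := by
  intro y hy
  obtain ⟨⟨hR, hyi⟩, hrest⟩ := faceMinus_prop hy
  rw [mem_tbdry]
  refine ⟨⟨fun j => ?_, fun hall => ?_⟩, ⟨y + unitVec i, fun j => ?_, ⟨i, Or.inl rfl⟩⟩⟩
  · by_cases hj : j = i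
    · subst hj; omega
    · have := hrest j hj; omega
  · have := hall i; omega
  · rw [addu]; by_cases hj : j = i
    · subst hj; rw [if_pos rfl]; omega
    · rw [if_neg hj]; have := hrest j hj; omega

lemma tbdry_eq :
    tbdry d R = Finset.univ.biUnion (fun i => facePlus d R i ∪ faceMinus d R i) := by
  ext x
  simp only [Finset.mem_biUnion, Finset.mem_union, Finset.mem_univ, true_and]
  constructor
  · intro hx
    obtain ⟨⟨hC, hD⟩, y, hy, j, hadj⟩ := mem_tbdry.1 hx
    push_neg at hD
    have hR : 1 ≤ (R:ℤ) := by have := hy j; have := hC j; omega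
    rcases hadj with hxy | hxy
    · -- y = x + unitVec j, so x = y - unitVec j : violated coordinate must be j, x j = -R
      have hco : ∀ k, y k = x k + if k = j then 1 else 0 := fun k => by rw [hxy]; rfl
      have hxj : x j = -(R:ℤ) := by
        obtain ⟨k, hk⟩ := hD
        have hck := hC k
        have hyk := hy k
        have hcok := hco k
        have hcoj := hco j
        have hyj := hy j
        by_cases hkj : k = j
        · subst hkj; rw [if_pos rfl] at hcok; omega
        · rw [if_neg hkj] at hcok; omega
      refine ⟨j, Or.inr ?_⟩
      rw [faceMinus, Finset.mem_filter, mem_sideA]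
      refine ⟨⟨⟨by omega, by omega⟩, fun k hk => ?_⟩, hxj⟩
      have := hco k; rw [if_neg hk] at this; have := hy k; omega
    · -- x = y + unitVec j
      have hco : ∀ k, x k = y k + if k = j then 1 else 0 := fun k => by rw [hxy]; rfl
      have hxj : x j = (R:ℤ) := by
        obtain ⟨k, hk⟩ := hD
        have hck := hC k
        have hyk := hy k
        have hcok := hco k
        have hcoj := hco j
        have hyj := hy j
        by_cases hkj : k = j
        · subst hkj; rw [if_pos rfl] at hcok; omega
        · rw [if_neg hkj] at hcok; omega
      refine ⟨j, Or.inl ?_⟩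
      rw [facePlus, Finset.mem_filter, mem_sideB']
      refine ⟨⟨⟨by omega, by omega⟩, fun k hk => ?_⟩, hxj⟩
      have := hco k; rw [if_neg hk] at this; have := hy k; omega
  · rintro ⟨i, hx | hx⟩
    · exact facePlus_subset_tbdry i hx
    · exact faceMinus_subset_tbdry i hx

lemma disj_facePM (i : Fin d) : Disjoint (facePlus d R i) (faceMinus d R i) := by
  rw [Finset.disjoint_left]
  intro x h1 h2
  have := (facePlus_prop h1).1
  have := (faceMinus_prop h2).1
  omega

lemma pairwise_faces :
    ((Finset.univ : Finset (Fin d)) : Set (Fin d)).PairwiseDisjoint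
      (fun i => facePlus d R i ∪ faceMinus d R i) := by
  intro i _ j _ hij
  simp only [Function.onFun]
  rw [Finset.disjoint_left]
  intro x hx hx'
  have hxj : x j = (R:ℤ) ∨ x j = -(R:ℤ) := by
    rcases Finset.mem_union.1 hx' with h | h
    · exact Or.inl (facePlus_prop h).1.2
    · exact Or.inr (faceMinus_prop h).1.2
  have hxo : -(R:ℤ) < x j ∧ x j < R := by
    rcases Finset.mem_union.1 hx with h | h
    · exact (facePlus_prop h).2 j (Ne.symm hij)
    · exact (faceMinus_prop h).2 j (Ne.symm hij)
  omega

end helpers2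
section helpers3
variable {d R : ℕ}

lemma mem_Enor {e : Zd d × Zd d} :
    e ∈ Enor d R ↔ (e.1 ∈ boxD d R ∧ e.2 ∈ boxC d R ∧ e.2 ∉ boxD d R) ∧ Adj e.1 e.2 := by
  simp only [Enor, bdry, Finset.mem_filter, Finset.mem_product, Finset.mem_sdiff]

lemma nR_val_plus {i : Fin d} {y : Zd d} (hy : y ∈ facePlus d R i)
    {e : Zd d × Zd d} (he : e ∈ Enor d R) (h2 : e.1 = y ∨ e.2 = y) :
    e = (y - unitVec i, y) := by
  obtain ⟨⟨hz, _, hnot⟩, hadj⟩ := mem_Enor.1 he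
  obtain ⟨⟨hR, hyi⟩, hrest⟩ := facePlus_prop hy
  rw [mem_boxD] at hz
  have hynot : y ∉ boxD d R := by rw [mem_boxD]; intro hc; have := hc i; omega
  rcases h2 with h2 | h2
  · exact absurd (h2 ▸ (mem_boxD.2 hz : e.1 ∈ boxD d R)) hynot
  · subst h2
    obtain ⟨j, hj | hj⟩ := hadj
    · -- e.2 = e.1 + u j, i.e. e.1 = y - u j
      have hco : ∀ k, e.2 k = e.1 k + if k = j then 1 else 0 := fun k => by rw [hj]; rfl
      have hji : j = i := by
        by_contra hne
        have h1 := hco i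
        rw [if_neg (fun h => hne h.symm)] at h1
        have := hz i
        omega
      subst hji
      have he1 : e.1 = e.2 - unitVec j := by
        have := congrArg (fun z => z - unitVec j) hj
        simpa [add_sub_cancel_right] using this.symm
      exact Prod.ext he1 rfl
    · -- e.1 = e.2 + u j : e.1 j = y j + 1, contradiction
      have hco : ∀ k, e.1 k = e.2 k + if k = j then 1 else 0 := fun k => by rw [hj]; rfl
      exfalso
      by_cases hji : j = i
      · subst hji
        have := hco j; rw [if_pos rfl] at this
        have := hz j; omega
      · have := hco i; rw [if_neg (fun h => hji h.symm)] at this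
        have := hz i; omega

lemma nR_val_minus {i : Fin d} {y : Zd d} (hy : y ∈ faceMinus d R i)
    {e : Zd d × Zd d} (he : e ∈ Enor d R) (h2 : e.1 = y ∨ e.2 = y) :
    e = (y + unitVec i, y) := by
  obtain ⟨⟨hz, _, hnot⟩, hadj⟩ := mem_Enor.1 he
  obtain ⟨⟨hR, hyi⟩, hrest⟩ := faceMinus_prop hy
  rw [mem_boxD] at hz
  have hynot : y ∉ boxD d R := by rw [mem_boxD]; intro hc; have := hc i; omega
  rcases h2 with h2 | h2
  · exact absurd (h2 ▸ (mem_boxD.2 hz : e.1 ∈ boxD d R)) hynot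
  · subst h2
    obtain ⟨j, hj | hj⟩ := hadj
    · -- e.2 = e.1 + u j : e.1 j = y j - 1
      have hco : ∀ k, e.2 k = e.1 k + if k = j then 1 else 0 := fun k => by rw [hj]; rfl
      exfalso
      by_cases hji : j = i
      · subst hji
        have := hco j; rw [if_pos rfl] at this
        have := hz j; omega
      · have := hco i; rw [if_neg (fun h => hji h.symm)] at this
        have := hz i; omega
    · -- e.1 = e.2 + u j
      have hco : ∀ k, e.1 k = e.2 k + if k = j then 1 else 0 := fun k => by rw [hj]; rfl
      have hji : j = i := by
        by_contra hne
        have h1 := hco i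
        rw [if_neg (fun h => hne h.symm)] at h1
        have := hz i
        omega
      subst hji
      exact Prod.ext hj rfl

end helpers3

/-- summation identity, Lemma `b66`: for an antisymmetric edge function `g`
with `h_i(x) = g(x, x+e_i)`, `∇^*·h = ∇^*·f` on `D_R` and `f = 0` outside `D_{R-1}`,
`∑_{(x,y)∈E_R} g(x,y) ∇̄_{xy} w = 2 ∑_{y∈∂̃D_R} g(n_R(y)) w(y) + 2 ∑_{x∈D_R} ∇w(x)·f(x)`. -/
theorem summation_identity
    (d : ℕ) (hd : 2 ≤ d) (R : ℕ)
    (g : Zd d × Zd d → ℝ) (w : Zd d → ℝ) (h f : Zd d → Fin d → ℝ)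
    (hg : ∀ x y : Zd d, Adj x y → g (x, y) = - g (y, x))
    (hh : ∀ (x : Zd d) (i : Fin d), h x i = g (x, x + unitVec i))
    (hhf : ∀ x ∈ boxD d R, divStar h x = divStar f x)
    (hf0 : ∀ x : Zd d, x ∉ boxD d (R - 1) → f x = 0)
    (nR : Zd d → Zd d × Zd d)
    (hnR : ∀ y ∈ tbdry d R, nR y ∈ Enor d R ∧ ((nR y).1 = y ∨ (nR y).2 = y)) :
    ∑ e ∈ ER d R, g e * (w e.2 - w e.1)
      = 2 * (∑ y ∈ tbdry d R, g (nR y) * w y)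
        + 2 * (∑ x ∈ boxD d R, ∑ i : Fin d, dGrad i w x * f x i) := by
  classical
  set P := (ER d R).filter (fun e => ∃ i, e.2 = e.1 + unitVec i) with hP
  set Q := (ER d R).filter (fun e => ∃ i, e.1 = e.2 + unitVec i) with hQ
  have hER_adj : ∀ e ∈ ER d R, Adj e.1 e.2 := fun e he => (Finset.mem_filter.1 he).2.1
  have hswap : ∀ e ∈ ER d R, (e.2, e.1) ∈ ER d R := by
    intro e he
    simp only [ER, Finset.mem_filter, Finset.mem_product] at he ⊢
    obtain ⟨⟨h1, h2⟩, hadj, hb⟩ := he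
    refine ⟨⟨h2, h1⟩, ?_, fun j => by rw [add_comm]; exact hb j⟩
    obtain ⟨i, hA | hA⟩ := hadj
    exacts [⟨i, Or.inr hA⟩, ⟨i, Or.inl hA⟩]
  have hunion : P ∪ Q = ER d R := by
    ext e
    simp only [hP, hQ, Finset.mem_union, Finset.mem_filter]
    constructor
    · rintro (⟨h1, -⟩ | ⟨h1, -⟩) <;> exact h1
    · intro he
      obtain ⟨i, h1 | h1⟩ := hER_adj e he
      exacts [Or.inl ⟨he, i, h1⟩, Or.inr ⟨he, i, h1⟩]
  have hdisj : Disjoint P Q := by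
    rw [Finset.disjoint_left]
    rintro e he1 he2
    obtain ⟨-, i, hi⟩ := Finset.mem_filter.1 he1
    obtain ⟨-, j, hj⟩ := Finset.mem_filter.1 he2
    have h1 : e.2 i = e.1 i + 1 := by rw [hi, addu, if_pos rfl]
    have h2 : e.1 i = e.2 i + if i = j then 1 else 0 := by rw [hj, addu]
    by_cases hij : i = j
    · rw [if_pos hij] at h2; omega
    · rw [if_neg hij] at h2; omega
  have hQP : ∑ e ∈ Q, g e * (w e.2 - w e.1) = ∑ e ∈ P, g e * (w e.2 - w e.1) := by
    apply Finset.sum_bij (fun e _ => (e.2, e.1))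
    · intro e he
      obtain ⟨heER, i, hi⟩ := Finset.mem_filter.1 he
      exact Finset.mem_filter.2 ⟨hswap e heER, i, hi⟩
    · intro a _ b _ hab
      exact Prod.ext (congrArg Prod.snd hab) (congrArg Prod.fst hab)
    · intro b hb
      obtain ⟨hbER, i, hi⟩ := Finset.mem_filter.1 hb
      refine ⟨(b.2, b.1), Finset.mem_filter.2 ⟨hswap b hbER, i, hi⟩, ?_⟩
      exact Prod.mk.eta
    · intro e he
      obtain ⟨heER, -⟩ := Finset.mem_filter.1 he
      have hadj := hER_adj e heER
      have hge := hg e.1 e.2 hadj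
      calc g e * (w e.2 - w e.1) = g (e.1, e.2) * (w e.2 - w e.1) := by rw [Prod.mk.eta]
        _ = g (e.2, e.1) * (w e.1 - w e.2) := by rw [hge]; ring
  have step1 : ∑ e ∈ ER d R, g e * (w e.2 - w e.1) = 2 * ∑ e ∈ P, g e * (w e.2 - w e.1) := by
    rw [← hunion, Finset.sum_union hdisj, hQP]; ring
  have hsig : ∑ p ∈ Finset.univ.sigma (fun i => sideA d R i),
        g (p.2, p.2 + unitVec p.1) * (w (p.2 + unitVec p.1) - w p.2)
      = ∑ e ∈ P, g e * (w e.2 - w e.1) := by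
    apply Finset.sum_bij (fun p _ => (p.2, p.2 + unitVec p.1))
    · intro p hp
      have hpA : p.2 ∈ sideA d R p.1 := (Finset.mem_sigma.1 hp).2
      exact Finset.mem_filter.2 ⟨pos_mem_ER.2 hpA, p.1, rfl⟩
    · rintro ⟨i, x⟩ _ ⟨j, y⟩ _ hab
      simp only [Prod.mk.injEq] at hab
      obtain ⟨h1, h2⟩ := hab
      subst h1
      have h3 : unitVec i = unitVec j := add_left_cancel h2
      have h4 : i = j := by
        by_contra hne
        have := congrFun h3 i
        simp [unitVec, hne] at this
      subst h4; rfl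
    · intro b hb
      obtain ⟨hbER, i, hi⟩ := Finset.mem_filter.1 hb
      refine ⟨⟨i, b.1⟩, Finset.mem_sigma.2 ⟨Finset.mem_univ i, ?_⟩, ?_⟩
      · apply pos_mem_ER.1
        show (b.1, b.1 + unitVec i) ∈ ER d R
        rw [← hi, Prod.mk.eta]; exact hbER
      · show (b.1, b.1 + unitVec i) = b
        rw [← hi, Prod.mk.eta]
    · intro p hp; rfl
  have step2 : ∑ e ∈ P, g e * (w e.2 - w e.1)
      = ∑ i : Fin d, ∑ x ∈ sideA d R i,
          g (x, x + unitVec i) * (w (x + unitVec i) - w x) := by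
    rw [← hsig, Finset.sum_sigma]
  have himg : ∀ i : Fin d, ∑ x ∈ sideA d R i, h x i * w (x + unitVec i)
      = ∑ y ∈ sideB d R i, h (y - unitVec i) i * w y := by
    intro i
    rw [sideB, Finset.sum_image (fun a _ b _ hab => add_right_cancel hab)]
    exact (Finset.sum_congr rfl fun x _ => by rw [add_sub_cancel_right]).symm
  have keyi : ∀ i : Fin d, ∑ x ∈ sideA d R i, g (x, x + unitVec i) * (w (x + unitVec i) - w x)
      = ((∑ y ∈ facePlus d R i, g (nR y) * w y) + (∑ x ∈ faceMinus d R i, g (nR x) * w x))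
        + ∑ x ∈ boxD d R, (h (x - unitVec i) i - h x i) * w x := by
    intro i
    have hsplitB : ∑ y ∈ sideB d R i, h (y - unitVec i) i * w y
        = (∑ y ∈ facePlus d R i, h (y - unitVec i) i * w y)
          + ∑ y ∈ boxD d R, h (y - unitVec i) i * w y := by
      rw [← filterB_eq (R := R) i]
      exact (Finset.sum_filter_add_sum_filter_not _ _ _).symm
    have hsplitA : ∑ x ∈ sideA d R i, h x i * w x
        = (∑ x ∈ faceMinus d R i, h x i * w x) + ∑ x ∈ boxD d R, h x i * w x := by
      rw [← filterA_eq (R := R) i]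
      exact (Finset.sum_filter_add_sum_filter_not _ _ _).symm
    have hFp : ∀ y ∈ facePlus d R i, h (y - unitVec i) i * w y = g (nR y) * w y := by
      intro y hy
      obtain ⟨hE, hor⟩ := hnR y (facePlus_subset_tbdry i hy)
      rw [nR_val_plus hy hE hor, hh, sub_add_cancel]
    have hFm : ∀ x ∈ faceMinus d R i, (-(h x i)) * w x = g (nR x) * w x := by
      intro x hxm
      obtain ⟨hE, hor⟩ := hnR x (faceMinus_subset_tbdry i hxm)
      rw [nR_val_minus hxm hE hor]
      have h2 : g (x + unitVec i, x) = -(h x i) := by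
        rw [hh]
        linarith [hg x (x + unitVec i) (adj_right x i)]
      rw [h2]
    have e1 : ∑ x ∈ boxD d R, (h (x - unitVec i) i - h x i) * w x
        = (∑ x ∈ boxD d R, h (x - unitVec i) i * w x) - ∑ x ∈ boxD d R, h x i * w x := by
      rw [← Finset.sum_sub_distrib]
      exact Finset.sum_congr rfl fun x _ => by ring
    have e2 : ∑ x ∈ faceMinus d R i, (-(h x i)) * w x
        = - ∑ x ∈ faceMinus d R i, h x i * w x := by
      rw [← Finset.sum_neg_distrib]
      exact Finset.sum_congr rfl fun x _ => by ring
    calc ∑ x ∈ sideA d R i, g (x, x + unitVec i) * (w (x + unitVec i) - w x)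
        = ∑ x ∈ sideA d R i, (h x i * w (x + unitVec i) - h x i * w x) :=
          Finset.sum_congr rfl fun x _ => by rw [← hh]; ring
      _ = (∑ x ∈ sideA d R i, h x i * w (x + unitVec i)) - ∑ x ∈ sideA d R i, h x i * w x :=
          Finset.sum_sub_distrib _ _
      _ = (∑ y ∈ sideB d R i, h (y - unitVec i) i * w y) - ∑ x ∈ sideA d R i, h x i * w x := by
          rw [himg i]
      _ = ((∑ y ∈ facePlus d R i, h (y - unitVec i) i * w y)
            + ∑ y ∈ boxD d R, h (y - unitVec i) i * w y)
          - ((∑ x ∈ faceMinus d R i, h x i * w x) + ∑ x ∈ boxD d R, h x i * w x) := by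
          rw [hsplitB, hsplitA]
      _ = ((∑ y ∈ facePlus d R i, h (y - unitVec i) i * w y)
            + (∑ x ∈ faceMinus d R i, (-(h x i)) * w x))
          + ∑ x ∈ boxD d R, (h (x - unitVec i) i - h x i) * w x := by
          rw [e1, e2]; ring
      _ = ((∑ y ∈ facePlus d R i, g (nR y) * w y) + (∑ x ∈ faceMinus d R i, g (nR x) * w x))
          + ∑ x ∈ boxD d R, (h (x - unitVec i) i - h x i) * w x := by
          rw [Finset.sum_congr rfl hFp, Finset.sum_congr rfl hFm]
  have hbd : ∑ i : Fin d, ((∑ y ∈ facePlus d R i, g (nR y) * w y)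
        + (∑ x ∈ faceMinus d R i, g (nR x) * w x))
      = ∑ y ∈ tbdry d R, g (nR y) * w y := by
    rw [tbdry_eq, Finset.sum_biUnion pairwise_faces]
    exact (Finset.sum_congr rfl fun i _ => Finset.sum_union (disj_facePM i)).symm
  have hmid : ∑ i : Fin d, ∑ x ∈ boxD d R, (h (x - unitVec i) i - h x i) * w x
      = ∑ x ∈ boxD d R, divStar f x * w x := by
    rw [Finset.sum_comm]
    apply Finset.sum_congr rfl
    intro x hx
    rw [← hhf x hx, divStar, Finset.sum_mul]
  have c6i : ∀ i : Fin d, ∑ x ∈ boxD d R, f (x - unitVec i) i * w x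
      = ∑ x ∈ boxD d R, f x i * w (x + unitVec i) := by
    intro i
    have hinj : ∀ a ∈ boxD d R, ∀ b ∈ boxD d R, a - unitVec i = b - unitVec i → a = b :=
      fun a _ b _ hab => by
        have := congrArg (fun z => z + unitVec i) hab
        simpa [sub_add_cancel] using this
    have himg2 : ∑ x ∈ boxD d R, f (x - unitVec i) i * w x
        = ∑ y ∈ (boxD d R).image (· - unitVec i), f y i * w (y + unitVec i) := by
      rw [Finset.sum_image hinj]
      exact (Finset.sum_congr rfl fun x _ => by rw [sub_add_cancel]).symm
    have hsub1 : boxD d (R-1) ⊆ (boxD d R).image (· - unitVec i) := by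
      intro y hy
      rw [mem_boxD] at hy
      refine Finset.mem_image.2 ⟨y + unitVec i, mem_boxD.2 fun j => ?_, add_sub_cancel_right y _⟩
      rw [addu]
      by_cases hj : j = i
      · rw [if_pos hj]; have := hy j; omega
      · rw [if_neg hj]; have := hy j; omega
    have hsub2 : boxD d (R-1) ⊆ boxD d R := by
      intro y hy
      rw [mem_boxD] at hy ⊢
      intro j; have := hy j; omega
    have hvan : ∀ y, y ∉ boxD d (R-1) → f y i * w (y + unitVec i) = 0 := by
      intro y hy; rw [hf0 y hy]; simp
    rw [himg2, ← Finset.sum_subset hsub1 (fun y _ hy => hvan y hy),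
        ← Finset.sum_subset hsub2 (fun y _ hy => hvan y hy)]
  have hC6 : ∑ x ∈ boxD d R, divStar f x * w x
      = ∑ x ∈ boxD d R, ∑ i : Fin d, dGrad i w x * f x i := by
    calc ∑ x ∈ boxD d R, divStar f x * w x
        = ∑ x ∈ boxD d R, ∑ i : Fin d, (f (x - unitVec i) i - f x i) * w x :=
          Finset.sum_congr rfl fun x _ => by rw [divStar, Finset.sum_mul]
      _ = ∑ i : Fin d, ∑ x ∈ boxD d R, (f (x - unitVec i) i - f x i) * w x := Finset.sum_comm
      _ = ∑ i : Fin d, ∑ x ∈ boxD d R, f x i * (w (x + unitVec i) - w x) := by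
          apply Finset.sum_congr rfl
          intro i _
          have e1 : ∑ x ∈ boxD d R, (f (x - unitVec i) i - f x i) * w x
              = (∑ x ∈ boxD d R, f (x - unitVec i) i * w x)
                - ∑ x ∈ boxD d R, f x i * w x := by
            rw [← Finset.sum_sub_distrib]
            exact Finset.sum_congr rfl fun x _ => by ring
          rw [e1, c6i i, ← Finset.sum_sub_distrib]
          exact Finset.sum_congr rfl fun x _ => by ring
      _ = ∑ x ∈ boxD d R, ∑ i : Fin d, dGrad i w x * f x i := by
          rw [Finset.sum_comm]
          exact Finset.sum_congr rfl fun x _ => Finset.sum_congr rfl fun i _ => by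
            rw [dGrad]; ring
  have final1 : ∑ i : Fin d, ∑ x ∈ sideA d R i,
        g (x, x + unitVec i) * (w (x + unitVec i) - w x)
      = (∑ y ∈ tbdry d R, g (nR y) * w y)
        + ∑ x ∈ boxD d R, ∑ i : Fin d, dGrad i w x * f x i := by
    rw [Finset.sum_congr rfl (fun i _ => keyi i), Finset.sum_add_distrib, hbd, hmid, hC6]
  rw [step1, step2, final1]; ring

end
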